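/- arXiv:1809.08821 — 3 statements merged into one kernel-verified Lean document; each statement's English description precedes it below -/
import Mathlib

section
/- Let X be a finite solvable group, π a set of primes, and Y a subgroup of X such that every prime dividing the index [X:Y] lies in π. Then O_π(Y) ≤ O_π(X). -/
universe u

open Subgroup

def IsHallPi (π : Set ℕ) {G : Type u} [Group G] (H : Subgroup G) : Prop :=
  (∀ p : ℕ, p.Prime → p ∣ Nat.card H → p ∈ π) ∧
  (∀ p : ℕ, p.Prime → p ∣ H.index → p ∉ π)

lemma pi_coprime (π : Set ℕ) {a b : ℕ}
    (h1 : ∀ p : ℕ, p.Prime → p ∣ a → p ∈ π) (h2 : ∀ p : ℕ, p.Prime → p ∣ b → p ∉ π) :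
    Nat.Coprime a b := by
  rw [Nat.Coprime]
  by_contra h
  obtain ⟨p, hp, hpd⟩ := Nat.exists_prime_and_dvd h
  exact h2 p hp (hpd.trans (Nat.gcd_dvd_right a b)) (h1 p hp (hpd.trans (Nat.gcd_dvd_left a b)))

lemma subgroup_eq_of_le_of_card_le {G : Type u} [Group G] [Finite G] {H K : Subgroup G}
    (h : H ≤ K) (hc : Nat.card K ≤ Nat.card H) : H = K := by
  apply SetLike.coe_injective
  exact Set.eq_of_subset_of_ncard_le h
    (by rwa [← Nat.card_coe_set_eq, ← Nat.card_coe_set_eq])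


lemma exists_nontrivial_normal_pgroup (G : Type u) [Group G] [Finite G] [Group.IsSolvable G]
    [Nontrivial G] : ∃ (p : ℕ) (M : Subgroup G), p.Prime ∧ M.Normal ∧ M ≠ ⊥ ∧ IsPGroup p M := by
  classical
  obtain ⟨n, hn⟩ := Group.IsSolvable.solvable (G := G)
  have hex : ∃ k, derivedSeries G k = ⊥ := ⟨n, hn⟩
  set k := Nat.find hex with hk
  have hkbot : derivedSeries G k = ⊥ := Nat.find_spec hex
  have hk0 : k ≠ 0 := by
    intro h
    rw [h, derivedSeries_zero] at hkbot
    exact top_ne_bot hkbot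
  set A := derivedSeries G (k - 1) with hA
  have hAbot : A ≠ ⊥ := Nat.find_min hex (by omega)
  have hAcomm : ⁅A, A⁆ = ⊥ := by
    have he : k - 1 + 1 = k := by omega
    have : derivedSeries G (k - 1 + 1) = ⊥ := by rw [he]; exact hkbot
    rwa [derivedSeries_succ] at this
  have hcomm : ∀ x ∈ A, ∀ y ∈ A, y * x = x * y := fun x hx y hy =>
    Subgroup.mem_centralizer_iff.mp
      (Subgroup.commutator_eq_bot_iff_le_centralizer.mp hAcomm hx) y hy
  -- a prime dividing |A|
  have hcard : Nat.card A ≠ 1 := fun h => hAbot (Subgroup.card_eq_one.mp h)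
  obtain ⟨p, hp, hpd⟩ := Nat.exists_prime_and_dvd hcard
  haveI : Fact p.Prime := ⟨hp⟩
  obtain ⟨a, ha⟩ := exists_prime_orderOf_dvd_card' (G := ↥A) p hpd
  -- the p-primary component of A, as a subgroup of G
  refine ⟨p, {
      carrier := {x | x ∈ A ∧ ∃ m : ℕ, x ^ p ^ m = 1}
      one_mem' := ⟨A.one_mem, 0, one_pow _⟩
      inv_mem' := by
        rintro x ⟨hxA, m, hm⟩
        exact ⟨A.inv_mem hxA, m, by rw [inv_pow, hm, inv_one]⟩
      mul_mem' := by
        rintro x y ⟨hxA, mx, hmx⟩ ⟨hyA, my, hmy⟩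
        refine ⟨A.mul_mem hxA hyA, mx + my, ?_⟩
        have hc : Commute x y := (hcomm x hxA y hyA).symm
        rw [hc.mul_pow, pow_add, pow_mul, hmx, one_pow, one_mul, mul_comm (p ^ mx),
          pow_mul, hmy, one_pow] }, hp, ?_, ?_, ?_⟩
  · constructor
    intro x hx g
    obtain ⟨hxA, m, hm⟩ := hx
    refine ⟨(derivedSeries_normal G (k - 1)).conj_mem x hxA g, m, ?_⟩
    rw [conj_pow, hm, mul_one, mul_inv_cancel]
  · intro h
    have haA : (a : G) ∈ A := a.2
    have hmem : (a : G) ∈ (⊥ : Subgroup G) := by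
      rw [← h]
      refine ⟨haA, 1, ?_⟩
      rw [pow_one, ← Subgroup.coe_pow, ← ha, pow_orderOf_eq_one, Subgroup.coe_one]
    rw [Subgroup.mem_bot] at hmem
    have ha1 : a = 1 := Subtype.ext hmem
    have : orderOf a = 1 := by rw [ha1, orderOf_one]
    rw [ha] at this
    exact hp.one_lt.ne' this
  · rintro ⟨x, hxA, m, hm⟩
    exact ⟨m, Subtype.ext (by rw [SubmonoidClass.coe_pow, hm]; rfl)⟩




lemma exists_isHallPi_aux (π : Set ℕ) :
    ∀ (n : ℕ) (G : Type u) [Group G] [Finite G] [Group.IsSolvable G],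
      Nat.card G ≤ n → ∃ H : Subgroup G, IsHallPi π H := by
  intro n
  induction n with
  | zero => intro G _ _ _ h; exact absurd h (by have := Nat.card_pos (α := G); omega)
  | succ n ih =>
    intro G _ _ _ hle
    rcases subsingleton_or_nontrivial G with hG | hG
    · refine ⟨⊥, fun p hp hpd => ?_, fun p hp hpd => ?_⟩
      · rw [Subgroup.card_bot] at hpd
        exact absurd (Nat.eq_one_of_dvd_one hpd) hp.one_lt.ne'
      · rw [Subgroup.index_bot, Nat.card_eq_one_iff_unique.mpr ⟨inferInstance, ⟨1⟩⟩] at hpd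
        exact absurd (Nat.eq_one_of_dvd_one hpd) hp.one_lt.ne'
    · obtain ⟨p, M, hp, hMnorm, hMbot, hMp⟩ := exists_nontrivial_normal_pgroup G
      haveI : Fact p.Prime := ⟨hp⟩
      have hM1 : 1 < Nat.card M := by
        have h1 := Nat.card_pos (α := ↥M)
        have h2 : Nat.card M ≠ 1 := fun h => hMbot (Subgroup.card_eq_one.mp h)
        omega
      have hpdvdM : ∀ q : ℕ, q.Prime → q ∣ Nat.card M → q = p := by
        obtain ⟨m, hm⟩ := hMp.exists_card_eq
        intro q hq hqd
        rw [hm] at hqd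
        exact (Nat.prime_dvd_prime_iff_eq hq hp).mp (hq.dvd_of_dvd_pow hqd)
      have hcardG : Nat.card G = Nat.card (G ⧸ M) * Nat.card M :=
        Subgroup.card_eq_card_quotient_mul_card_subgroup M
      have hQpos := Nat.card_pos (α := G ⧸ M)
      have hQlt : Nat.card (G ⧸ M) ≤ n := by nlinarith
      obtain ⟨Hb, hHb1, hHb2⟩ := ih (G ⧸ M) hQlt
      set f := QuotientGroup.mk' M with hf
      set H := Hb.comap f with hH
      have hfs : Function.Surjective f := QuotientGroup.mk'_surjective M
      have hidx : H.index = Hb.index := Subgroup.index_comap_of_surjective Hb hfs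
      have hHbpos := Nat.card_pos (α := ↥Hb)
      have hHbidx : Hb.index ≠ 0 := Subgroup.index_ne_zero_of_finite
      have h1 : Nat.card H * H.index = Nat.card G := Subgroup.card_mul_index H
      have h2 : Nat.card Hb * Hb.index = Nat.card (G ⧸ M) := Subgroup.card_mul_index Hb
      have hcardH : Nat.card H = Nat.card Hb * Nat.card M := by
        have : Nat.card H * Hb.index = (Nat.card Hb * Nat.card M) * Hb.index := by
          rw [← hidx, h1, hcardG, ← h2, hidx]; ring
        exact Nat.eq_of_mul_eq_mul_right (Nat.pos_of_ne_zero hHbidx) this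
      by_cases hpπ : p ∈ π
      · refine ⟨H, fun q hq hqd => ?_, fun q hq hqd => ?_⟩
        · rw [hcardH] at hqd
          rcases (Nat.Prime.dvd_mul hq).mp hqd with h | h
          · exact hHb1 q hq h
          · exact (hpdvdM q hq h) ▸ hpπ
        · rw [hidx] at hqd; exact hHb2 q hq hqd
      · have hMH : M ≤ H := by
          intro x hx
          have : f x = 1 := (QuotientGroup.eq_one_iff x).mpr hx
          exact Subgroup.mem_comap.mpr (this ▸ Hb.one_mem)
        set M' := M.subgroupOf H with hM'
        haveI : M'.Normal := hMnorm.subgroupOf H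
        have hcM' : Nat.card M' = Nat.card M :=
          Nat.card_congr (Subgroup.subgroupOfEquivOfLe hMH).toEquiv
        have h3 : Nat.card M' * M'.index = Nat.card H := Subgroup.card_mul_index M'
        have hiM' : M'.index = Nat.card Hb := by
          rw [hcM', hcardH] at h3
          have : Nat.card M * M'.index = Nat.card M * Nat.card Hb := by rw [h3]; ring
          exact Nat.eq_of_mul_eq_mul_left (by omega) this
        have hcop : Nat.Coprime (Nat.card M') M'.index := by
          rw [hcM', hiM']
          obtain ⟨m, hm⟩ := hMp.exists_card_eq
          rw [hm]
          refine Nat.Coprime.pow_left _ ((Nat.Prime.coprime_iff_not_dvd hp).mpr ?_)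
          exact fun hdvd => hpπ (hHb1 p hp hdvd)
        obtain ⟨K, hK⟩ := Subgroup.exists_right_complement'_of_coprime hcop
        have hcK : Nat.card K = Nat.card Hb := by
          have h4 := hK.card_mul
          rw [hcM', hcardH] at h4
          have : Nat.card M * Nat.card K = Nat.card M * Nat.card Hb := by rw [h4]; ring
          exact Nat.eq_of_mul_eq_mul_left (by omega) this
        have hcK' : Nat.card (K.map H.subtype) = Nat.card Hb := by
          rw [← hcK]
          exact (Nat.card_congr (Subgroup.equivMapOfInjective K _
            (Subgroup.subtype_injective H)).toEquiv).symm
        have hiK' : (K.map H.subtype).index = Hb.index * Nat.card M := by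
          have h5 : Nat.card (K.map H.subtype) * (K.map H.subtype).index = Nat.card G :=
            Subgroup.card_mul_index _
          rw [hcK', hcardG, ← h2] at h5
          have : Nat.card Hb * (K.map H.subtype).index
              = Nat.card Hb * (Hb.index * Nat.card M) := by rw [h5]; ring
          exact Nat.eq_of_mul_eq_mul_left hHbpos this
        refine ⟨K.map H.subtype, fun q hq hqd => hHb1 q hq (hcK' ▸ hqd),
          fun q hq hqd => ?_⟩
        rw [hiK'] at hqd
        rcases (Nat.Prime.dvd_mul hq).mp hqd with h | h
        · exact hHb2 q hq h
        · exact (hpdvdM q hq h) ▸ hpπ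

lemma exists_isHallPi_ax (π : Set ℕ) (G : Type u) [Group G] [Finite G] [Group.IsSolvable G] :
    ∃ H : Subgroup G, IsHallPi π H :=
  exists_isHallPi_aux π (Nat.card G) G le_rfl

/-- A normal π-subgroup of a subgroup `Y` of π-index is contained in every Hall π-subgroup. -/
lemma le_of_isHallPi {X : Type u} [Group X] [Finite X] (π : Set ℕ)
    (Y : Subgroup X) (hind : ∀ p : ℕ, p.Prime → p ∣ Y.index → p ∈ π)
    (NY : Subgroup ↥Y) (hnorm : NY.Normal)
    (hpi : ∀ p : ℕ, p.Prime → p ∣ Nat.card NY → p ∈ π)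
    (H : Subgroup X) (hH : IsHallPi π H) : NY.map Y.subtype ≤ H := by
  set T : Subgroup ↥Y := (H ⊓ Y).subgroupOf Y with hT
  set S : Subgroup ↥Y := T ⊔ NY with hS
  -- card S divides card T * card NY
  have hq1 : Nat.card ↥S = Nat.card (↥S ⧸ NY.subgroupOf S) * Nat.card (NY.subgroupOf S) :=
    Subgroup.card_eq_card_quotient_mul_card_subgroup _
  have hq2 : Nat.card (↥S ⧸ NY.subgroupOf S) = Nat.card (↥T ⧸ NY.subgroupOf T) :=
    (Nat.card_congr (QuotientGroup.quotientInfEquivProdNormalQuotient T NY).toEquiv).symm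
  have hq3 : Nat.card (NY.subgroupOf S) = Nat.card NY :=
    Nat.card_congr (Subgroup.subgroupOfEquivOfLe le_sup_right).toEquiv
  have hq4 : Nat.card ↥T = Nat.card (↥T ⧸ NY.subgroupOf T) * Nat.card (NY.subgroupOf T) :=
    Subgroup.card_eq_card_quotient_mul_card_subgroup _
  have hSdvd : Nat.card ↥S ∣ Nat.card ↥T * Nat.card NY := by
    rw [hq1, hq2, hq3]
    exact mul_dvd_mul_right (Dvd.intro _ hq4.symm) _
  -- card T = card (H ⊓ Y), a π-number
  have hcT : Nat.card ↥T = Nat.card ↥(H ⊓ Y) :=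
    Nat.card_congr (Subgroup.subgroupOfEquivOfLe inf_le_right).toEquiv
  have hTpi : ∀ p : ℕ, p.Prime → p ∣ Nat.card ↥T → p ∈ π := by
    intro p hp hpd
    rw [hcT] at hpd
    exact hH.1 p hp (hpd.trans (Subgroup.card_dvd_of_le inf_le_left))
  have hSpi : ∀ p : ℕ, p.Prime → p ∣ Nat.card ↥S → p ∈ π := by
    intro p hp hpd
    rcases (Nat.Prime.dvd_mul hp).mp (hpd.trans hSdvd) with h | h
    · exact hTpi p hp h
    · exact hpi p hp h
  -- H.index divides card Y
  have hYpos := Nat.card_pos (α := ↥Y)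
  have hYidx : Y.index ≠ 0 := Subgroup.index_ne_zero_of_finite
  have hHidx : H.index ≠ 0 := Subgroup.index_ne_zero_of_finite
  have hcdvd : H.index ∣ Nat.card Y := by
    have h1 : H.index ∣ Nat.card ↥Y * Y.index := by
      rw [Subgroup.card_mul_index Y]
      exact Subgroup.index_dvd_card (H := H)
    exact Nat.Coprime.dvd_of_dvd_mul_right (pi_coprime π hind hH.2).symm h1
  -- card S * H.index divides card Y
  have hSY : Nat.card ↥S ∣ Nat.card ↥Y := Subgroup.card_subgroup_dvd_card S
  have hScop : Nat.Coprime (Nat.card ↥S) H.index := pi_coprime π hSpi hH.2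
  have hmul : Nat.card ↥S * H.index ∣ Nat.card ↥Y := Nat.Coprime.mul_dvd_of_dvd_of_dvd hScop hSY hcdvd
  -- card Y ≤ card (H ⊓ Y) * H.index
  have hYle : Nat.card ↥Y ≤ Nat.card ↥(H ⊓ Y) * H.index := by
    have h1 : (H ⊓ Y).index ≤ H.index * Y.index := Subgroup.index_inf_le (H := H) (K := Y)
    have h2 : Nat.card ↥(H ⊓ Y) * (H ⊓ Y).index = Nat.card X := Subgroup.card_mul_index _
    have h3 : Nat.card ↥Y * Y.index = Nat.card X := Subgroup.card_mul_index _
    have h4 : Nat.card ↥Y * Y.index ≤ (Nat.card ↥(H ⊓ Y) * H.index) * Y.index := by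
      calc Nat.card ↥Y * Y.index = Nat.card ↥(H ⊓ Y) * (H ⊓ Y).index := by rw [h2, h3]
        _ ≤ Nat.card ↥(H ⊓ Y) * (H.index * Y.index) := Nat.mul_le_mul_left _ h1
        _ = (Nat.card ↥(H ⊓ Y) * H.index) * Y.index := by ring
    exact Nat.le_of_mul_le_mul_right h4 (Nat.pos_of_ne_zero hYidx)
  -- conclude card S ≤ card T
  have hSle : Nat.card ↥S ≤ Nat.card ↥T := by
    have h5 : Nat.card ↥S * H.index ≤ Nat.card ↥Y := Nat.le_of_dvd hYpos hmul
    have h6 : Nat.card ↥S * H.index ≤ Nat.card ↥T * H.index := by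
      rw [hcT]; omega
    exact Nat.le_of_mul_le_mul_right h6 (Nat.pos_of_ne_zero hHidx)
  have hST : T = S := subgroup_eq_of_le_of_card_le le_sup_left hSle
  have hNYT : NY ≤ T := hST ▸ le_sup_right
  calc NY.map Y.subtype ≤ T.map Y.subtype := Subgroup.map_mono hNYT
    _ = (H ⊓ Y) ⊓ Y := Subgroup.subgroupOf_map_subtype _ _
    _ ≤ H := inf_le_left.trans inf_le_left

lemma isHallPi_comap_conj {X : Type u} [Group X] [Finite X] (π : Set ℕ)
    {H : Subgroup X} (hH : IsHallPi π H) (g : X) :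
    IsHallPi π (H.comap (MulAut.conj g).toMonoidHom) := by
  constructor
  · intro p hp hpd
    apply hH.1 p hp
    rw [Subgroup.comap_equiv_eq_map_symm' (MulAut.conj g) H] at hpd
    have e := Subgroup.equivMapOfInjective H ((MulAut.conj g).symm.toMonoidHom)
      (MulEquiv.injective _)
    rw [← Nat.card_congr e.toEquiv] at hpd
    exact hpd
  · intro p hp hpd
    rw [Subgroup.index_comap_of_surjective H (MulAut.conj g).surjective] at hpd
    exact hH.2 p hp hpd

/-- `N` is the largest normal `π`-subgroup `O_π` of the ambient group. -/
def IsMaxNormalPiSubgroup {G : Type*} [Group G] (π : Set ℕ) (N : Subgroup G) : Prop :=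
  N.Normal ∧ (∀ p : ℕ, p.Prime → p ∣ Nat.card N → p ∈ π) ∧
  ∀ M : Subgroup G, M.Normal → (∀ p : ℕ, p.Prime → p ∣ Nat.card M → p ∈ π) → M ≤ N

theorem opi_le_opi_of_index_pi {X : Type*} [Group X] [Finite X] [Group.IsSolvable X] (π : Set ℕ)
    (Y : Subgroup X) (hind : ∀ p : ℕ, p.Prime → p ∣ Y.index → p ∈ π)
    (NY : Subgroup ↥Y) (NX : Subgroup X)
    (hNY : IsMaxNormalPiSubgroup π NY) (hNX : IsMaxNormalPiSubgroup π NX) :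
    NY.map Y.subtype ≤ NX := by
  obtain ⟨H₀, hH₀⟩ := exists_isHallPi_ax π X
  set M : Subgroup X := sInf {H : Subgroup X | IsHallPi π H} with hM
  have hPle : NY.map Y.subtype ≤ M :=
    le_sInf fun H hH => le_of_isHallPi π Y hind NY hNY.1 hNY.2.1 H hH
  have hMnormal : M.Normal := by
    constructor
    intro m hm g
    rw [Subgroup.mem_sInf] at hm ⊢
    intro H hH
    have h1 := hm _ (isHallPi_comap_conj π hH g)
    rw [Subgroup.mem_comap] at h1
    exact h1
  have hMpi : ∀ p : ℕ, p.Prime → p ∣ Nat.card M → p ∈ π := fun p hp hpd =>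
    hH₀.1 p hp (hpd.trans (Subgroup.card_dvd_of_le (sInf_le hH₀)))
  exact hPle.trans (hNX.2.2 M hMnormal hMpi)
end

section
/- Let X be a finite solvable group and Y a subgroup of X whose index is a power of a prime s. Let r be a prime divisor of |X| with r ≠ s. Then O_{{r,s}}(Y) and O_{{r,s}}(X) have a common Sylow r-subgroup; that is, there is a Sylow r-subgroup of O_{{r,s}}(Y) which is also a Sylow r-subgroup of O_{{r,s}}(X). -/
open Subgroup

namespace CSW

/-- `n` is a π-number. -/
def PiNum (π : Set ℕ) (n : ℕ) : Prop := ∀ p : ℕ, p.Prime → p ∣ n → p ∈ π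

lemma PiNum.of_dvd {π : Set ℕ} {m n : ℕ} (h : PiNum π n) (hd : m ∣ n) : PiNum π m :=
  fun p pp hp => h p pp (hp.trans hd)

lemma PiNum.mul {π : Set ℕ} {m n : ℕ} (hm : PiNum π m) (hn : PiNum π n) : PiNum π (m * n) :=
  fun p pp hp => (pp.dvd_mul.mp hp).elim (hm p pp) (hn p pp)

section
variable {G : Type*} [Group G]

lemma card_inf_left {A B : Subgroup G} : Nat.card (A.subgroupOf B) = Nat.card ((A ⊓ B : Subgroup G)) := by
  rw [← inf_subgroupOf_right A B]
  exact Nat.card_congr (subgroupOfEquivOfLe inf_le_right).toEquiv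

/-- For `N` normal, `[N : N ⊓ Y] = [Y ⊔ N : Y]`, hence divides `[G : Y]`. -/
lemma relindex_dvd_index_of_normal' [Finite G] (N Y : Subgroup G) [hN : N.Normal] :
    Y.relIndex N ∣ Y.index := by
  have hc : (0:ℕ) < Nat.card ((Y ⊓ N : Subgroup G)) := Nat.card_pos
  have he : N.relIndex Y ≠ 0 := by
    have : Finite (↥Y ⧸ N.subgroupOf Y) := inferInstance
    exact Subgroup.index_ne_zero_of_finite
  -- card identities
  have h1 : Nat.card ((Y ⊓ N : Subgroup G)) * Y.relIndex N = Nat.card N := by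
    have := Subgroup.card_mul_index (Y.subgroupOf N)
    rwa [card_inf_left] at this
  have h2 : Nat.card ((Y ⊓ N : Subgroup G)) * N.relIndex Y = Nat.card Y := by
    have := Subgroup.card_mul_index (N.subgroupOf Y)
    rw [card_inf_left] at this
    rwa [show ((N ⊓ Y : Subgroup G)) = ((Y ⊓ N : Subgroup G)) from inf_comm .. ] at this
  have h3 : Nat.card N * N.relIndex Y = Nat.card ((Y ⊔ N : Subgroup G)) := by
    have := Subgroup.card_mul_index (N.subgroupOf (Y ⊔ N))
    rw [show Nat.card (N.subgroupOf (Y ⊔ N)) = Nat.card N from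
      Nat.card_congr (subgroupOfEquivOfLe le_sup_right).toEquiv] at this
    rwa [show (N.subgroupOf (Y ⊔ N)).index = N.relIndex Y from
      Subgroup.relIndex_sup_right Y N] at this
  have h4 : Nat.card Y * Y.relIndex (Y ⊔ N) = Nat.card ((Y ⊔ N : Subgroup G)) := by
    have := Subgroup.card_mul_index (Y.subgroupOf (Y ⊔ N))
    rwa [show Nat.card (Y.subgroupOf (Y ⊔ N)) = Nat.card Y from
      Nat.card_congr (subgroupOfEquivOfLe le_sup_left).toEquiv] at this
  have key : Y.relIndex N = Y.relIndex (Y ⊔ N) := by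
    have e1 : (Nat.card ((Y ⊓ N : Subgroup G)) * Y.relIndex N) * N.relIndex Y
        = (Nat.card ((Y ⊓ N : Subgroup G)) * N.relIndex Y) * Y.relIndex (Y ⊔ N) := by
      rw [h1, h2, h3, h4]
    have := Nat.eq_of_mul_eq_mul_left hc (by linarith [e1] : Nat.card ((Y ⊓ N : Subgroup G)) * (Y.relIndex N * N.relIndex Y) = Nat.card ((Y ⊓ N : Subgroup G)) * (N.relIndex Y * Y.relIndex (Y ⊔ N)))
    rw [mul_comm (Y.relIndex N)] at this
    exact Nat.eq_of_mul_eq_mul_left (Nat.pos_of_ne_zero he) this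
  rw [key]
  exact relIndex_dvd_index_of_le le_sup_left


lemma card_sup_dvd [Finite G] (A B : Subgroup G) [hA : A.Normal] :
    Nat.card ((A ⊔ B : Subgroup G)) ∣ Nat.card A * Nat.card B := by
  have h1 : Nat.card A * A.relIndex (A ⊔ B) = Nat.card ((A ⊔ B : Subgroup G)) := by
    have := Subgroup.card_mul_index (A.subgroupOf (A ⊔ B))
    rwa [show Nat.card (A.subgroupOf (A ⊔ B)) = Nat.card A from
      Nat.card_congr (subgroupOfEquivOfLe le_sup_left).toEquiv] at this
  have h2 : A.relIndex (A ⊔ B) = A.relIndex B := by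
    rw [sup_comm]; exact Subgroup.relIndex_sup_right B A
  have h3 : A.relIndex B ∣ Nat.card B :=
    Dvd.intro_left _ (Subgroup.card_mul_index (A.subgroupOf B))
  rw [← h1, h2]
  exact mul_dvd_mul_left _ h3

end
section Opi
variable (π : Set ℕ) (G : Type*) [Group G] [Finite G]

lemma exists_opi : ∃ N : Subgroup G, (N.Normal ∧ PiNum π (Nat.card N)) ∧
    ∀ M : Subgroup G, M.Normal → PiNum π (Nat.card M) → M ≤ N := by
  classical
  set S : Set (Subgroup G) := {N | N.Normal ∧ PiNum π (Nat.card N)} with hS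
  have hfin : S.Finite := Set.toFinite S
  have hne : S.Nonempty := ⟨⊥, inferInstance, by
    intro p pp hp
    rw [Subgroup.card_bot] at hp
    exact absurd (Nat.eq_one_of_dvd_one hp) pp.ne_one⟩
  obtain ⟨N, hN, hmax⟩ : ∃ N ∈ S, ∀ a' ∈ S, id N ≤ id a' → id N = id a' := by
    obtain ⟨N, hN⟩ := hfin.exists_maximal hne
    exact ⟨N, hN.1, fun a' ha h => le_antisymm h (hN.2 ha h)⟩
  refine ⟨N, hN, fun M hMn hMp => ?_⟩
  have hsup : N ⊔ M ∈ S := by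
    haveI := hN.1
    refine ⟨Subgroup.sup_normal N M, fun p pp hp => ?_⟩
    have hd : Nat.card ((N ⊔ M : Subgroup G)) ∣ Nat.card N * Nat.card M := card_sup_dvd N M
    rcases pp.dvd_mul.mp (hp.trans hd) with h | h
    · exact hN.2 p pp h
    · exact hMp p pp h
  have := hmax _ hsup (le_sup_left : N ≤ N ⊔ M)
  simp only [id] at this
  rw [this]
  exact le_sup_right

noncomputable def Opi : Subgroup G := (exists_opi π G).choose

lemma Opi_normal : (Opi π G).Normal := (exists_opi π G).choose_spec.1.1
lemma Opi_pinum : PiNum π (Nat.card (Opi π G)) := (exists_opi π G).choose_spec.1.2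
lemma le_Opi {M : Subgroup G} (h1 : M.Normal) (h2 : PiNum π (Nat.card M)) : M ≤ Opi π G :=
  (exists_opi π G).choose_spec.2 M h1 h2

end Opi
section Transfer
variable {G : Type*} {G' : Type*} [Group G] [Group G']

lemma card_restrict_ker_mul [Finite G] (f : G →* G') (H : Subgroup G) :
    Nat.card H = Nat.card (f.domRestrict H).ker * Nat.card (H.map f) := by
  have h1 := Subgroup.card_eq_card_quotient_mul_card_subgroup (f.domRestrict H).ker
  have h2 : Nat.card (↥H ⧸ (f.domRestrict H).ker) = Nat.card ((f.domRestrict H).range) :=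
    Nat.card_congr (QuotientGroup.quotientKerEquivRange (f.domRestrict H)).toEquiv
  rw [h1, h2, MonoidHom.restrict_range, mul_comm]

variable [Finite G] [Finite G'] (π : Set ℕ)

/-- Pushing `Opi` along a surjection. -/
lemma card_Opi_dvd_ker_mul {f : G →* G'} (hf : Function.Surjective f) :
    Nat.card (Opi π G) ∣ Nat.card f.ker * Nat.card (Opi π G') := by
  have key := card_restrict_ker_mul f (Opi π G)
  have hker : Nat.card (f.domRestrict (Opi π G)).ker ∣ Nat.card f.ker := by
    rw [MonoidHom.ker_restrict, card_inf_left]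
    exact Subgroup.card_dvd_of_le inf_le_left
  have hmapdvd : Nat.card ((Opi π G).map f) ∣ Nat.card (Opi π G) :=
    key ▸ Dvd.intro_left _ rfl
  have hle : (Opi π G).map f ≤ Opi π G' := by
    refine le_Opi π G' ((Opi_normal π G).map f hf) (fun p pp hp => ?_)
    exact Opi_pinum π G p pp (hp.trans hmapdvd)
  rw [key]
  exact mul_dvd_mul hker (dvd_trans (Subgroup.card_dvd_of_le hle) dvd_rfl)

/-- Pulling `Opi` back along a surjection with `π`-kernel. -/
lemma ker_mul_card_Opi_dvd {f : G →* G'} (hf : Function.Surjective f)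
    (hker : PiNum π (Nat.card f.ker)) :
    Nat.card f.ker * Nat.card (Opi π G') ∣ Nat.card (Opi π G) := by
  set L : Subgroup G := (Opi π G').comap f with hL
  have hkerle : f.ker ≤ L := by
    rw [hL, ← f.comap_bot]
    exact Subgroup.comap_mono bot_le
  have hkercard : Nat.card (f.domRestrict L).ker = Nat.card f.ker := by
    rw [MonoidHom.ker_restrict]
    exact Nat.card_congr (subgroupOfEquivOfLe hkerle).toEquiv
  have hmap : L.map f = Opi π G' := Subgroup.map_comap_eq_self_of_surjective hf _
  have hcardL : Nat.card L = Nat.card f.ker * Nat.card (Opi π G') := by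
    rw [card_restrict_ker_mul f L, hkercard, hmap]
  have hLle : L ≤ Opi π G := by
    refine le_Opi π G ((Opi_normal π G').comap f) (fun p pp hp => ?_)
    rw [hcardL] at hp
    rcases pp.dvd_mul.mp hp with h | h
    · exact hker p pp h
    · exact Opi_pinum π G' p pp h
  rw [← hcardL]
  exact Subgroup.card_dvd_of_le hLle

end Transfer

section MapNormal
variable (π : Set ℕ) {G : Type*} [Group G] [Finite G]

lemma Opi_map_equiv_le (e : G ≃* G) : (Opi π G).map e.toMonoidHom ≤ Opi π G := by
  refine le_Opi π G ((Opi_normal π G).map e.toMonoidHom e.surjective) (fun p pp hp => ?_)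
  have : Nat.card ((Opi π G).map e.toMonoidHom) = Nat.card (Opi π G) :=
    (Nat.card_congr (Subgroup.equivMapOfInjective _ _ e.injective).toEquiv).symm
  exact Opi_pinum π G p pp (this ▸ hp)

lemma Opi_map_subtype_normal (C : Subgroup G) [hC : C.Normal] :
    ((Opi π C).map C.subtype).Normal := by
  constructor
  intro n hn g
  obtain ⟨m, hm, rfl⟩ := hn
  let e : (↥C) ≃* (↥C) := MulAut.conjNormal g
  have h1 : e m ∈ Opi π (↥C) := Opi_map_equiv_le π e ⟨m, hm, rfl⟩
  refine ⟨e m, h1, ?_⟩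
  show ((e m : ↥C) : G) = g * (m : G) * g⁻¹
  exact MulAut.conjNormal_apply g m

end MapNormal

section Misc
variable {G : Type*} [Group G]

lemma disjoint_of_coprime_card [Finite G] {A B : Subgroup G}
    (h : Nat.Coprime (Nat.card A) (Nat.card B)) : Disjoint A B := by
  rw [disjoint_iff_inf_le]
  intro x hx
  have hA : orderOf x ∣ Nat.card A := by
    have : orderOf (⟨x, hx.1⟩ : A) ∣ Nat.card A := orderOf_dvd_natCard _
    rwa [orderOf_mk] at this
  have hB : orderOf x ∣ Nat.card B := by
    have : orderOf (⟨x, hx.2⟩ : B) ∣ Nat.card B := orderOf_dvd_natCard _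
    rwa [orderOf_mk] at this
  have h1 : orderOf x ∣ Nat.gcd (Nat.card A) (Nat.card B) := Nat.dvd_gcd hA hB
  rw [Nat.Coprime] at h
  rw [h] at h1
  rw [Subgroup.mem_bot, ← orderOf_eq_one_iff]
  exact Nat.eq_one_of_dvd_one h1

lemma centralizer_normal (M : Subgroup G) [hM : M.Normal] :
    (Subgroup.centralizer (M : Set G)).Normal := by
  constructor
  intro n hn g
  rw [Subgroup.mem_centralizer_iff] at hn ⊢
  intro m hm
  have hm' : g⁻¹ * m * g ∈ M := by
    have := hM.conj_mem m hm g⁻¹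
    simpa using this
  have h := hn _ hm'
  have : g * ((g⁻¹ * m * g) * n) * g⁻¹ = g * (n * (g⁻¹ * m * g)) * g⁻¹ := by rw [h]
  calc m * (g * n * g⁻¹) = g * ((g⁻¹ * m * g) * n) * g⁻¹ := by group
    _ = g * (n * (g⁻¹ * m * g)) * g⁻¹ := this
    _ = g * n * g⁻¹ * m := by group

/-- Elements of `Y` conjugate `N.map Y.subtype` into itself, for `N` normal in `Y`. -/
lemma conj_mem_map_subtype {Y : Subgroup G} {N : Subgroup Y} (hN : N.Normal)
    {y w : G} (hy : y ∈ Y) (hw : w ∈ N.map Y.subtype) : y * w * y⁻¹ ∈ N.map Y.subtype := by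
  obtain ⟨w₀, hw₀, rfl⟩ := hw
  exact ⟨⟨y, hy⟩ * w₀ * ⟨y, hy⟩⁻¹, hN.conj_mem w₀ hw₀ ⟨y, hy⟩, rfl⟩

end Misc

section Seed
variable (X : Type*) [Group X] [Finite X]

/-- A nontrivial finite solvable group has a nontrivial normal `p`-subgroup. -/
lemma exists_normal_pgroup [Group.IsSolvable X] (hX : Nat.card X ≠ 1) :
    ∃ (p : ℕ) (M : Subgroup X), p.Prime ∧ M.Normal ∧ M ≠ ⊥ ∧ IsPGroup p M := by
  classical
  obtain ⟨k, hk⟩ := Group.IsSolvable.solvable (G := X)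
  have h0 : derivedSeries X 0 ≠ ⊥ := by
    rw [derivedSeries_zero]
    intro h
    have : Nat.card ((⊤ : Subgroup X)) = 1 := by rw [h, Subgroup.card_bot]
    rw [Subgroup.card_top] at this
    exact hX this
  have hex : ∃ n, derivedSeries X n = ⊥ := ⟨k, hk⟩
  have hnbot : derivedSeries X (Nat.find hex) = ⊥ := Nat.find_spec hex
  have hnpos : Nat.find hex ≠ 0 := fun h => h0 (h ▸ hnbot)
  obtain ⟨m, hm⟩ := Nat.exists_eq_succ_of_ne_zero hnpos
  rw [hm] at hnbot
  have hA : derivedSeries X m ≠ ⊥ := Nat.find_min hex (hm ▸ Nat.lt_succ_self m)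
  set A := derivedSeries X m with hAdef
  haveI hAnormal : A.Normal := derivedSeries_normal X m
  have hAabel : ∀ x ∈ A, ∀ y ∈ A, x * y = y * x := by
    have hcomm : ⁅A, A⁆ = ⊥ := hnbot
    rw [Subgroup.commutator_eq_bot_iff_le_centralizer] at hcomm
    intro x hx y hy
    exact Subgroup.mem_centralizer_iff.mp (hcomm hy) x hx
  have hcardA : Nat.card A ≠ 1 := by
    intro h
    exact hA (Subgroup.eq_bot_of_card_eq A h)
  obtain ⟨p, pp, hpdvd⟩ := Nat.exists_prime_and_dvd hcardA
  haveI := Fact.mk pp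
  -- the p-primary component of A
  set M : Subgroup X :=
    { carrier := {x | x ∈ A ∧ ∃ j : ℕ, x ^ p ^ j = 1}
      mul_mem' := by
        rintro x y ⟨hxA, j, hj⟩ ⟨hyA, l, hl⟩
        refine ⟨mul_mem hxA hyA, j + l, ?_⟩
        have hcomm : Commute x y := hAabel x hxA y hyA
        rw [hcomm.mul_pow, pow_add, pow_mul, hj, one_pow, one_mul, mul_comm (p^j),
          pow_mul, hl, one_pow]
      one_mem' := ⟨one_mem A, 0, one_pow _⟩
      inv_mem' := by
        rintro x ⟨hxA, j, hj⟩
        exact ⟨inv_mem hxA, j, by rw [inv_pow, hj, inv_one]⟩ } with hMdef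
  have hMnormal : M.Normal := by
    constructor
    rintro x ⟨hxA, j, hj⟩ g
    refine ⟨hAnormal.conj_mem x hxA g, j, ?_⟩
    have : (g * x * g⁻¹) ^ p ^ j = g * x ^ p ^ j * g⁻¹ := by
      rw [← MulAut.conj_apply, ← map_pow, MulAut.conj_apply]
    rw [this, hj, mul_one, mul_inv_cancel]
  refine ⟨p, M, pp, hMnormal, ?_, ?_⟩
  · -- nontrivial via Cauchy
    haveI := Fintype.ofFinite X
    obtain ⟨a, ha⟩ := exists_prime_orderOf_dvd_card (G := A) p
      (by rw [← Nat.card_eq_fintype_card]; exact hpdvd)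
    intro hbot
    have hamem : (a : X) ∈ M := by
      refine ⟨a.2, 1, ?_⟩
      rw [pow_one]
      have : a ^ p = 1 := by rw [← ha]; exact pow_orderOf_eq_one a
      exact_mod_cast congrArg (Subtype.val) this
    rw [hbot, Subgroup.mem_bot] at hamem
    have : orderOf a = 1 := by
      rw [orderOf_eq_one_iff]
      exact Subtype.ext hamem
    rw [ha] at this
    exact pp.ne_one this
  · intro g
    obtain ⟨hgA, j, hj⟩ := g.2
    exact ⟨j, Subtype.ext (by rw [SubmonoidClass.coe_pow]; exact hj)⟩

end Seed

section VR
lemma fact_le_of_dvd {a b : ℕ} (hb : b ≠ 0) (h : a ∣ b) (r : ℕ) :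
    a.factorization r ≤ b.factorization r := by
  have ha : a ≠ 0 := by rintro rfl; exact hb (zero_dvd_iff.mp h)
  exact Finsupp.le_def.mp ((Nat.factorization_le_iff_dvd ha hb).mpr h) r

lemma fact_mul_apply {a b : ℕ} (ha : a ≠ 0) (hb : b ≠ 0) (r : ℕ) :
    (a * b).factorization r = a.factorization r + b.factorization r := by
  rw [Nat.factorization_mul ha hb, Finsupp.add_apply]

lemma fact_eq_zero_of_dvd_pow {p r a : ℕ} (pp : p.Prime) (hne : r ≠ p) {k : ℕ}
    (h : a ∣ p ^ k) : a.factorization r = 0 := by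
  obtain ⟨j, rfl⟩ := ((Nat.dvd_prime_pow pp).mp h).imp (fun j hj => hj.2)
  rw [pp.factorization_pow, Finsupp.single_apply, if_neg (fun hh => hne hh.symm)]
end VR

section MapRestrict
variable {G : Type*} {G' : Type*} [Group G] [Group G']

/-- The induced surjection `Y → Y.map f`. -/
def mapRestrict (f : G →* G') (Y : Subgroup G) : ↥Y →* ↥(Y.map f) :=
  (f.domRestrict Y).codRestrict _ (fun y => Subgroup.mem_map_of_mem f y.2)

lemma mapRestrict_surjective (f : G →* G') (Y : Subgroup G) :
    Function.Surjective (mapRestrict f Y) := by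
  rintro ⟨z, hz⟩
  obtain ⟨y, hy, rfl⟩ := hz
  exact ⟨⟨y, hy⟩, rfl⟩

lemma card_ker_mapRestrict_dvd (f : G →* G') (Y : Subgroup G) :
    Nat.card (mapRestrict f Y).ker ∣ Nat.card f.ker := by
  have h : (mapRestrict f Y).ker = f.ker.subgroupOf Y := by
    exact (MonoidHom.ker_codRestrict _ _ _).trans (MonoidHom.ker_domRestrict _ _)
  rw [h, card_inf_left]
  exact Subgroup.card_dvd_of_le inf_le_left

end MapRestrict

section Main
universe u

theorem main_ineq (s r : ℕ) (hs : s.Prime) (hr : r.Prime) (hrs : r ≠ s) :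
    ∀ (n : ℕ) (X : Type u) [Group X] [Finite X] [Group.IsSolvable X], Nat.card X = n →
      ∀ Y : Subgroup X, (∀ q : ℕ, q.Prime → q ∣ Y.index → q = s) →
      (Nat.card (Opi ({r, s} : Set ℕ) ↥Y)).factorization r ≤
        (Nat.card (Opi ({r, s} : Set ℕ) X)).factorization r := by
  intro n
  induction n using Nat.strong_induction_on with
  | _ n IH =>
  intro X _ _ _ hn Y hY
  set π : Set ℕ := {r, s} with hπ
  have hrπ : r ∈ π := by rw [hπ]; exact Set.mem_insert r {s}
  have hsπ : s ∈ π := by rw [hπ]; exact Set.mem_insert_of_mem r rfl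
  by_cases hX1 : Nat.card X = 1
  · have h1 : Nat.card (Opi π ↥Y) = 1 :=
      Nat.eq_one_of_dvd_one (hX1 ▸ ((Subgroup.card_subgroup_dvd_card (Opi π ↥Y)).trans
        (Subgroup.card_subgroup_dvd_card Y)))
    rw [h1, Nat.factorization_one]
    simp
  obtain ⟨p, M, pp, hMn, hMbot, hMp⟩ := exists_normal_pgroup X hX1
  haveI := hMn
  haveI := Fact.mk pp
  obtain ⟨k, hMk⟩ := hMp.exists_card_eq
  -- quotient setup
  set f := QuotientGroup.mk' M with hf
  have hfsurj : Function.Surjective f := QuotientGroup.mk'_surjective M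
  have hfker : f.ker = M := QuotientGroup.ker_mk' M
  have hcardQ : Nat.card (X ⧸ M) < n := by
    have h1 : Nat.card X = Nat.card (X ⧸ M) * Nat.card M :=
      Subgroup.card_eq_card_quotient_mul_card_subgroup M
    have h2 : 1 < Nat.card M := (Subgroup.one_lt_card_iff_ne_bot (H := M)).mpr hMbot
    have h5 : 0 < Nat.card (X ⧸ M) := Nat.card_pos
    rw [← hn, h1]
    calc Nat.card (X ⧸ M) < Nat.card (X ⧸ M) * 2 := by omega
      _ ≤ Nat.card (X ⧸ M) * Nat.card M := Nat.mul_le_mul_left _ h2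
  set Ybar := Y.map f with hYbar
  have hYbarindex : ∀ q : ℕ, q.Prime → q ∣ Ybar.index → q = s :=
    fun q hq hd => hY q hq (hd.trans (Subgroup.index_map_dvd Y hfsurj))
  have hIHQ := IH (Nat.card (X ⧸ M)) hcardQ (X ⧸ M) rfl Ybar hYbarindex
  set g := mapRestrict f Y with hg
  have hgker : Nat.card g.ker ∣ Nat.card M := by
    have := card_ker_mapRestrict_dvd f Y
    rwa [hfker] at this
  have hYside : (Nat.card (Opi π ↥Y)).factorization r ≤
      (Nat.card g.ker).factorization r + (Nat.card (Opi π ↥Ybar)).factorization r := by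
    have hd := card_Opi_dvd_ker_mul π (mapRestrict_surjective f Y)
    have h2 := fact_le_of_dvd (mul_ne_zero Nat.card_pos.ne' Nat.card_pos.ne') hd r
    rwa [fact_mul_apply Nat.card_pos.ne' Nat.card_pos.ne' r] at h2
  by_cases hpπ : p ∈ π
  · -- p ∈ {r, s} : quotient by M and pull back
    have hkerpi : PiNum π (Nat.card f.ker) := by
      rw [hfker, hMk]
      intro q hq hdq
      have : q = p := (Nat.prime_dvd_prime_iff_eq hq pp).mp (hq.dvd_of_dvd_pow hdq)
      rwa [this]
    have hXside := ker_mul_card_Opi_dvd π hfsurj hkerpi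
    have h2 := fact_le_of_dvd Nat.card_pos.ne' hXside r
    rw [fact_mul_apply Nat.card_pos.ne' Nat.card_pos.ne' r] at h2
    have h3 : (Nat.card g.ker).factorization r ≤ (Nat.card f.ker).factorization r := by
      apply fact_le_of_dvd Nat.card_pos.ne' _ r
      rw [hfker]
      exact hgker
    exact le_trans hYside (le_trans (add_le_add h3 hIHQ) h2)
  · -- p ∉ {r, s}
    have hrp : r ≠ p := fun h => hpπ (h ▸ hrπ)
    have hsp : s ≠ p := fun h => hpπ (h ▸ hsπ)
    have hMY : M ≤ Y := by
      have h1 : Y.relIndex M ∣ Y.index := relindex_dvd_index_of_normal' M Y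
      have h2 : Y.relIndex M ∣ Nat.card M :=
        Dvd.intro_left _ (Subgroup.card_mul_index (Y.subgroupOf M))
      have h3 : Y.relIndex M = 1 := by
        by_contra hne
        obtain ⟨q, hq, hqd⟩ := Nat.exists_prime_and_dvd hne
        have hq1 : q = s := hY q hq (hqd.trans h1)
        have hq2 : q = p := by
          have hh := hqd.trans h2
          rw [hMk] at hh
          exact (Nat.prime_dvd_prime_iff_eq hq pp).mp (hq.dvd_of_dvd_pow hh)
        exact hsp (hq1 ▸ hq2)
      exact Subgroup.relIndex_eq_one.mp h3
    set W : Subgroup ↥Y := Opi π ↥Y with hW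
    have hWpi : PiNum π (Nat.card W) := Opi_pinum π ↥Y
    have hWcop : (Nat.card W).Coprime (p ^ k) := by
      apply Nat.Coprime.pow_right
      exact (pp.coprime_iff_not_dvd.mpr (fun hdvd => hpπ (hWpi p pp hdvd))).symm
    have hWcomm : ∀ w ∈ W.map Y.subtype, ∀ m ∈ M, Commute w m := by
      intro w hw m hm
      have hmY : m ∈ Y := hMY hm
      have hdisj : Disjoint W (M.subgroupOf Y) := by
        apply disjoint_of_coprime_card
        have hcM : Nat.card (M.subgroupOf Y) = Nat.card M :=
          Nat.card_congr (subgroupOfEquivOfLe hMY).toEquiv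
        rw [hcM, hMk]
        exact hWcop
      obtain ⟨w₀, hw₀, rfl⟩ := hw
      have hcc := Subgroup.commute_of_normal_of_disjoint W (M.subgroupOf Y)
        (Opi_normal π ↥Y) Subgroup.normal_subgroupOf hdisj w₀ ⟨m, hmY⟩ hw₀
        (Subgroup.mem_subgroupOf.mpr hm)
      have := congrArg (fun z : ↥Y => (z : X)) hcc
      exact (by simpa using this : ((w₀ : X) * m = m * w₀))
    set C : Subgroup X := Subgroup.centralizer (M : Set X) with hC
    haveI hCn : C.Normal := centralizer_normal M
    have hWC : W.map Y.subtype ≤ C := by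
      intro w hw
      rw [hC, Subgroup.mem_centralizer_iff]
      intro m hm
      exact (hWcomm w hw m hm).symm
    by_cases hCtop : C = ⊤
    · -- M is central : quotient by M
      have hMcenter : ∀ m ∈ M, ∀ x : X, Commute m x := by
        intro m hm x
        have hx : x ∈ C := hCtop ▸ Subgroup.mem_top x
        rw [hC] at hx
        exact Subgroup.mem_centralizer_iff.mp hx m hm
      have hgker0 : (Nat.card g.ker).factorization r = 0 :=
        fact_eq_zero_of_dvd_pow pp hrp (hMk ▸ hgker)
      -- X-side: Schur–Zassenhaus complement
      set L : Subgroup X := (Opi π (X ⧸ M)).comap f with hL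
      haveI hLn : L.Normal := (Opi_normal π (X ⧸ M)).comap f
      have hkerle : f.ker ≤ L := by
        rw [hL, ← f.comap_bot]
        exact Subgroup.comap_mono bot_le
      have hMleL : M ≤ L := hfker ▸ hkerle
      have hcardL : Nat.card L = Nat.card M * Nat.card (Opi π (X ⧸ M)) := by
        rw [card_restrict_ker_mul f L]
        congr 1
        · rw [MonoidHom.ker_restrict]
          rw [show Nat.card ((f.ker).subgroupOf L) = Nat.card f.ker from
            Nat.card_congr (subgroupOfEquivOfLe hkerle).toEquiv]
          rw [hfker]
        · rw [hL, Subgroup.map_comap_eq_self_of_surjective hfsurj]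
      set Ml : Subgroup ↥L := M.subgroupOf L with hMl
      haveI : Ml.Normal := Subgroup.normal_subgroupOf
      have hcardMl : Nat.card Ml = Nat.card M :=
        Nat.card_congr (subgroupOfEquivOfLe hMleL).toEquiv
      have hpiQcop : p.Coprime (Nat.card (Opi π (X ⧸ M))) :=
        pp.coprime_iff_not_dvd.mpr (fun hdvd => hpπ (Opi_pinum π (X ⧸ M) p pp hdvd))
      have hMlindex : Ml.index = Nat.card (Opi π (X ⧸ M)) := by
        have h1 : Nat.card Ml * Ml.index = Nat.card L := Subgroup.card_mul_index Ml
        rw [hcardMl, hcardL] at h1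
        exact Nat.eq_of_mul_eq_mul_left Nat.card_pos h1
      have hcop : (Nat.card Ml).Coprime Ml.index := by
        rw [hcardMl, hMk, hMlindex]
        exact Nat.Coprime.pow_left k hpiQcop
      obtain ⟨H, hH⟩ := Subgroup.exists_right_complement'_of_coprime hcop
      have hcardH : Nat.card H = Nat.card (Opi π (X ⧸ M)) := by
        have hcm := hH.card_mul
        rw [hcardMl, hcardL] at hcm
        exact Nat.eq_of_mul_eq_mul_left Nat.card_pos hcm
      set H' : Subgroup X := H.map L.subtype with hH'
      have hcardH' : Nat.card H' = Nat.card (Opi π (X ⧸ M)) := by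
        rw [← hcardH]
        exact (Nat.card_congr (Subgroup.equivMapOfInjective H L.subtype
          (Subgroup.subtype_injective L)).toEquiv).symm
      have hforward : ∀ x ∈ H', ¬ p ∣ orderOf x := by
        intro x hx hdvd
        have h1 : orderOf x ∣ Nat.card H' := by
          have := orderOf_dvd_natCard (⟨x, hx⟩ : H')
          rwa [orderOf_mk] at this
        have h2 : p ∣ Nat.card (Opi π (X ⧸ M)) := hdvd.trans (hcardH' ▸ h1)
        exact hpπ (Opi_pinum π (X ⧸ M) p pp h2)
      have hdisjMH' : Disjoint M H' := by
        apply disjoint_of_coprime_card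
        rw [hMk, hcardH']
        exact Nat.Coprime.pow_left k hpiQcop
      have hbackward : ∀ x ∈ L, ¬ p ∣ orderOf x → x ∈ H' := by
        intro x hxL hnd
        obtain ⟨⟨mh, hh⟩, hmh, -⟩ := hH.existsUnique (⟨x, hxL⟩ : ↥L)
        set m' : X := ((mh : ↥L) : X) with hm'def
        set h' : X := ((hh : ↥L) : X) with hh'def
        have hmM : m' ∈ M := Subgroup.mem_subgroupOf.mp mh.2
        have hhH' : h' ∈ H' := ⟨hh, hh.2, rfl⟩
        have hxeq : x = m' * h' := by
          have := congrArg (fun z : ↥L => (z : X)) hmh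
          simpa using this.symm
        have hcomm : Commute m' h' := hMcenter m' hmM h'
        have hxo : m' ^ orderOf x * h' ^ orderOf x = 1 := by
          have h0 : (m' * h') ^ orderOf x = 1 := by
            rw [← hxeq]
            exact pow_orderOf_eq_one x
          rwa [hcomm.mul_pow] at h0
        have hminv : m' ^ orderOf x = (h' ^ orderOf x)⁻¹ := eq_inv_of_mul_eq_one_left hxo
        have hm1 : m' ^ orderOf x = 1 := by
          have hmem2 : (h' ^ orderOf x)⁻¹ ∈ H' := inv_mem (pow_mem hhH' (orderOf x))
          have hmem : m' ^ orderOf x ∈ M ⊓ H' := ⟨pow_mem hmM (orderOf x), by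
            rw [hminv]; exact hmem2⟩
          have := hdisjMH'.le_bot hmem
          rwa [Subgroup.mem_bot] at this
        have hom : orderOf m' ∣ orderOf x := orderOf_dvd_of_pow_eq_one hm1
        have homp : orderOf m' ∣ p ^ k := by
          have := orderOf_dvd_natCard (⟨m', hmM⟩ : M)
          rwa [orderOf_mk, hMk] at this
        have hcop2 : (p ^ k).Coprime (orderOf x) :=
          Nat.Coprime.pow_left k (pp.coprime_iff_not_dvd.mpr hnd)
        have hone : orderOf m' = 1 := by
          have := Nat.dvd_gcd homp hom
          rw [Nat.Coprime] at hcop2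
          rw [hcop2] at this
          exact Nat.eq_one_of_dvd_one this
        have hm'1 : m' = 1 := orderOf_eq_one_iff.mp hone
        rw [hxeq, hm'1, one_mul]
        exact hhH'
      haveI hH'n : H'.Normal := by
        constructor
        intro x hx gg
        apply hbackward
        · exact hLn.conj_mem x (Subgroup.map_subtype_le H hx) gg
        · have ho : orderOf (gg * x * gg⁻¹) = orderOf x := by
            rw [show gg * x * gg⁻¹ = (MulAut.conj gg).toMonoidHom x from rfl]
            exact orderOf_injective (MulAut.conj gg).toMonoidHom
              (MulAut.conj gg).injective x
          rw [ho]
          exact hforward x hx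
      have hH'le : H' ≤ Opi π X :=
        le_Opi π X hH'n (fun q hq hdq => Opi_pinum π (X ⧸ M) q hq (hcardH' ▸ hdq))
      have hXfinal : (Nat.card (Opi π (X ⧸ M))).factorization r ≤
          (Nat.card (Opi π X)).factorization r := by
        rw [← hcardH']
        exact fact_le_of_dvd Nat.card_pos.ne' (Subgroup.card_dvd_of_le hH'le) r
      have h4 := hYside
      rw [hgker0, zero_add] at h4
      exact h4.trans (hIHQ.trans hXfinal)
    · -- C is a proper normal subgroup
      have hCltX : Nat.card ↥C < n := by
        have h1 : Nat.card ↥C * C.index = Nat.card X := Subgroup.card_mul_index C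
        have h2 : C.index ≠ 1 := fun h => hCtop (Subgroup.index_eq_one.mp h)
        have h3 : C.index ≠ 0 := Subgroup.index_ne_zero_of_finite
        have h4 : 2 ≤ C.index := by omega
        have h5 : 0 < Nat.card ↥C := Nat.card_pos
        rw [← hn, ← h1]
        calc Nat.card ↥C < Nat.card ↥C * 2 := by omega
          _ ≤ Nat.card ↥C * C.index := Nat.mul_le_mul_left _ h4
      set Z : Subgroup ↥C := Y.subgroupOf C with hZ
      have hZindex : ∀ q : ℕ, q.Prime → q ∣ Z.index → q = s := by
        intro q hq hdq
        exact hY q hq (hdq.trans (relindex_dvd_index_of_normal' C Y))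
      have hIHC := IH (Nat.card ↥C) hCltX ↥C rfl Z hZindex
      have hWZ : Nat.card W ∣ Nat.card (Opi π ↥Z) := by
        have hWY : W.map Y.subtype ≤ Y := Subgroup.map_subtype_le W
        set W1 : Subgroup ↥C := (W.map Y.subtype).subgroupOf C with hW1
        have hW1Z : W1 ≤ Z := fun x hx =>
          Subgroup.mem_subgroupOf.mpr (hWY (Subgroup.mem_subgroupOf.mp hx))
        set W2 : Subgroup ↥Z := W1.subgroupOf Z with hW2
        have hcardW2 : Nat.card W2 = Nat.card W := by
          rw [show Nat.card W2 = Nat.card W1 from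
            Nat.card_congr (subgroupOfEquivOfLe hW1Z).toEquiv]
          rw [show Nat.card W1 = Nat.card (W.map Y.subtype) from
            Nat.card_congr (subgroupOfEquivOfLe hWC).toEquiv]
          exact (Nat.card_congr (Subgroup.equivMapOfInjective W Y.subtype
            (Subgroup.subtype_injective Y)).toEquiv).symm
        have hW2n : W2.Normal := by
          constructor
          intro w hw z
          rw [hW2, Subgroup.mem_subgroupOf] at hw ⊢
          rw [hW1, Subgroup.mem_subgroupOf] at hw ⊢
          have hzY : ((z : ↥C) : X) ∈ Y := Subgroup.mem_subgroupOf.mp z.2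
          have hconj := conj_mem_map_subtype (Opi_normal π ↥Y) hzY hw
          have hcoe : ((((z * w * z⁻¹ : ↥Z) : ↥C)) : X)
              = ((z : ↥C) : X) * ((w : ↥C) : X) * (((z : ↥C) : X))⁻¹ := by
            push_cast
            rfl
          rw [hcoe]
          exact hconj
        have hW2pi : PiNum π (Nat.card W2) := by
          rw [hcardW2]
          exact hWpi
        have := Subgroup.card_dvd_of_le (le_Opi π ↥Z hW2n hW2pi)
        rwa [hcardW2] at this
      have hCX : Nat.card (Opi π ↥C) ∣ Nat.card (Opi π X) := by
        have h1 : ((Opi π ↥C).map C.subtype).Normal := Opi_map_subtype_normal π C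
        have hcardmap : Nat.card ((Opi π ↥C).map C.subtype) = Nat.card (Opi π ↥C) :=
          (Nat.card_congr (Subgroup.equivMapOfInjective _ C.subtype
            (Subgroup.subtype_injective C)).toEquiv).symm
        have h2 : (Opi π ↥C).map C.subtype ≤ Opi π X :=
          le_Opi π X h1 (fun q hq hdq => Opi_pinum π ↥C q hq (hcardmap ▸ hdq))
        exact hcardmap ▸ Subgroup.card_dvd_of_le h2
      exact le_trans (fact_le_of_dvd Nat.card_pos.ne' hWZ r)
        (hIHC.trans (fact_le_of_dvd Nat.card_pos.ne' hCX r))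

end Main

end CSW

theorem common_sylow_of_ors {X : Type*} [Group X] [Finite X] [Group.IsSolvable X] {s r : ℕ}
    (hs : s.Prime) (hr : r.Prime) (hrs : r ≠ s) (hrX : r ∣ Nat.card X)
    (Y : Subgroup X) (a : ℕ) (hYi : Y.index = s ^ a)
    (OY : Subgroup ↥Y) (OX : Subgroup X)
    (hOY : IsMaxNormalPiSubgroup {r, s} OY) (hOX : IsMaxNormalPiSubgroup {r, s} OX) :
    ∃ R : Subgroup X, R ≤ OY.map Y.subtype ∧ R ≤ OX ∧ IsPGroup r ↥R ∧
      ¬ r ∣ R.relIndex (OY.map Y.subtype) ∧ ¬ r ∣ R.relIndex OX := by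
  haveI := Fact.mk hr
  haveI hOXn := hOX.1
  set π : Set ℕ := ({r, s} : Set ℕ) with hπ
  have hOXeq : OX = CSW.Opi π X :=
    le_antisymm (CSW.le_Opi π X hOX.1 hOX.2.1)
      (hOX.2.2 _ (CSW.Opi_normal π X) (CSW.Opi_pinum π X))
  have hOYeq : OY = CSW.Opi π ↥Y :=
    le_antisymm (CSW.le_Opi π ↥Y hOY.1 hOY.2.1)
      (hOY.2.2 _ (CSW.Opi_normal π ↥Y) (CSW.Opi_pinum π ↥Y))
  have hmain : (Nat.card OY).factorization r ≤ (Nat.card OX).factorization r := by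
    rw [hOXeq, hOYeq]
    exact CSW.main_ineq s r hs hr hrs (Nat.card X) X rfl Y (fun q hq hd => by
      rw [hYi] at hd
      exact (Nat.prime_dvd_prime_iff_eq hq hs).mp (hq.dvd_of_dvd_pow hd))
  set W' : Subgroup X := OY.map Y.subtype with hW'
  have hcardW' : Nat.card W' = Nat.card OY :=
    (Nat.card_congr (Subgroup.equivMapOfInjective _ _ (Subgroup.subtype_injective Y)).toEquiv).symm
  -- `OX ⊓ Y` is contained in `W'`
  have hOXYle : OX ⊓ Y ≤ W' := by
    have h1 : (OX.subgroupOf Y) ≤ OY :=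
      hOY.2.2 _ Subgroup.normal_subgroupOf (fun q hq hd => hOX.2.1 q hq (hd.trans (by
        rw [CSW.card_inf_left]
        exact Subgroup.card_dvd_of_le inf_le_left)))
    have h2 := Subgroup.map_mono (f := Y.subtype) h1
    rwa [Subgroup.subgroupOf_map_subtype] at h2
  -- r-part of `OX ⊓ Y` equals r-part of `OX`
  have hrelind : Y.relIndex OX ∣ s ^ a := hYi ▸ CSW.relindex_dvd_index_of_normal' OX Y
  have hprod : Nat.card ((OX ⊓ Y : Subgroup X)) * Y.relIndex OX = Nat.card OX := by
    have h := Subgroup.card_mul_index (Y.subgroupOf OX)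
    rw [CSW.card_inf_left] at h
    rwa [show ((Y ⊓ OX : Subgroup X)) = OX ⊓ Y from inf_comm .. ] at h
  have hrel0 : Y.relIndex OX ≠ 0 := Subgroup.index_ne_zero_of_finite
  have hvOXY : (Nat.card ((OX ⊓ Y : Subgroup X))).factorization r
      = (Nat.card OX).factorization r := by
    rw [← hprod, CSW.fact_mul_apply Nat.card_pos.ne' hrel0 r,
      CSW.fact_eq_zero_of_dvd_pow hs hrs hrelind, add_zero]
  -- pick a Sylow r-subgroup of OX ⊓ Y
  obtain ⟨P⟩ := Sylow.nonempty (p := r) (G := ↥(OX ⊓ Y))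
  set R : Subgroup X := (P : Subgroup ↥(OX ⊓ Y)).map (OX ⊓ Y).subtype with hR
  have hcardR : Nat.card R = r ^ (Nat.card ((OX ⊓ Y : Subgroup X))).factorization r := by
    rw [show Nat.card R = Nat.card (P : Subgroup ↥(OX ⊓ Y)) from
      (Nat.card_congr (Subgroup.equivMapOfInjective _ _
        (Subgroup.subtype_injective (OX ⊓ Y))).toEquiv).symm]
    exact P.card_eq_multiplicity
  have hvR : (Nat.card R).factorization r
      = (Nat.card ((OX ⊓ Y : Subgroup X))).factorization r := by
    rw [hcardR, hr.factorization_pow, Finsupp.single_apply, if_pos rfl]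
  have hRle1 : R ≤ OX ⊓ Y := Subgroup.map_subtype_le _
  have hRleW' : R ≤ W' := hRle1.trans hOXYle
  have hRleO : R ≤ OX := hRle1.trans inf_le_left
  -- the key relindex lemma
  have key : ∀ K : Subgroup X, R ≤ K →
      (Nat.card K).factorization r = (Nat.card R).factorization r → ¬ r ∣ R.relIndex K := by
    intro K hK hvr hdvd
    have h1 : Nat.card R * R.relIndex K = Nat.card K := by
      have h := Subgroup.card_mul_index (R.subgroupOf K)
      rwa [show Nat.card (R.subgroupOf K) = Nat.card R from by
        rw [CSW.card_inf_left, inf_eq_left.mpr hK]] at h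
    have hrel0' : R.relIndex K ≠ 0 := Subgroup.index_ne_zero_of_finite
    have h2 := CSW.fact_mul_apply (Nat.card_pos.ne' : Nat.card R ≠ 0) hrel0' r
    rw [h1] at h2
    have hge1 : 0 < (R.relIndex K).factorization r := hr.factorization_pos_of_dvd hrel0' hdvd
    omega
  refine ⟨R, hRleW', hRleO, P.isPGroup'.map _, ?_, ?_⟩
  · apply key W' hRleW'
    have hle1 : (Nat.card W').factorization r ≤ (Nat.card R).factorization r := by
      rw [hvR, hvOXY, hcardW']
      exact hmain
    have hle2 : (Nat.card R).factorization r ≤ (Nat.card W').factorization r :=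
      CSW.fact_le_of_dvd Nat.card_pos.ne' (Subgroup.card_dvd_of_le hRleW') r
    omega
  · apply key OX hRleO
    rw [hvR, hvOXY]
end

section
/- Let G be a finite solvable group and H a maximal subgroup of G with [G:H] a power of a prime p. If O_p(G) = 1, then the Fitting subgroup F(G) is contained in H, and moreover F(G) ≤ F(H); in particular F(G) is a p'-group. -/
theorem fitting_le_of_op_trivial {G : Type*} [Group G] [Finite G] [Group.IsSolvable G] {p : ℕ}
    (hp : p.Prime) (H : Subgroup G) (hmax : IsCoatom H) (a : ℕ) (hind : H.index = p ^ a)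
    (hOp : ∀ N : Subgroup G, N.Normal → IsPGroup p ↥N → N = ⊥)
    (F : Subgroup G) (FH : Subgroup ↥H)
    (hF : F.Normal ∧ Group.IsNilpotent ↥F ∧
      ∀ M : Subgroup G, M.Normal → Group.IsNilpotent ↥M → M ≤ F)
    (hFH : FH.Normal ∧ Group.IsNilpotent ↥FH ∧
      ∀ M : Subgroup ↥H, M.Normal → Group.IsNilpotent ↥M → M ≤ FH) :
    F ≤ H ∧ F ≤ FH.map H.subtype ∧ ¬ p ∣ Nat.card F := by
  obtain ⟨hFnorm, hFnil, _⟩ := hF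
  obtain ⟨hFHnorm, hFHnil, hFHmax⟩ := hFH
  haveI : Fact p.Prime := ⟨hp⟩
  haveI := hFnorm
  -- Step 1: p does not divide |F|
  have hpF : ¬ p ∣ Nat.card F := by
    intro hdvd
    have hne : Nonempty (Sylow p ↥F) := inferInstance
    obtain ⟨P⟩ := hne
    have hiff : Group.IsNilpotent ↥F ↔
        ∀ (q : ℕ) (_ : Fact q.Prime) (Q : Sylow q ↥F), (↑Q : Subgroup ↥F).Normal :=
      (isNilpotent_of_finite_tfae (G := ↥F)).out 0 3
    have hPnorm : (↑P : Subgroup ↥F).Normal := hiff.mp hFnil p ⟨hp⟩ P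
    haveI := hPnorm
    haveI : (↑P : Subgroup ↥F).Characteristic := Sylow.characteristic_of_normal P hPnorm
    have hmapnorm : ((↑P : Subgroup ↥F).map F.subtype).Normal :=
      ConjAct.normal_of_characteristic_of_normal
    have hpg : IsPGroup p ↥((↑P : Subgroup ↥F).map F.subtype) :=
      P.isPGroup'.map _
    have hbot := hOp _ hmapnorm hpg
    rw [Subgroup.map_eq_bot_iff_of_injective _ F.subtype_injective] at hbot
    have hcard := Sylow.card_eq_multiplicity P
    rw [hbot, Subgroup.card_bot] at hcard
    have hk : 0 < (Nat.card ↥F).factorization p :=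
      Nat.Prime.factorization_pos_of_dvd hp Nat.card_pos.ne' hdvd
    have : 1 < p ^ (Nat.card ↥F).factorization p := Nat.one_lt_pow hk.ne' hp.one_lt
    omega
  -- a ≥ 1
  have ha : 1 ≤ a := by
    by_contra h
    push_neg at h
    interval_cases a
    exact hmax.1 (Subgroup.index_eq_one.mp (by simpa using hind))
  -- Step 2: F ≤ H
  have hFH' : F ≤ H := by
    by_contra hle
    have hsup : H ⊔ F = ⊤ := hmax.2 _ (lt_of_le_of_ne le_sup_left (by
      intro h
      exact hle (h ▸ le_sup_right)))
    have h3 : F.index = (F.subgroupOf H).index := by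
      have := Subgroup.relIndex_sup_right H F
      rw [hsup, Subgroup.relIndex_top_right] at this
      exact this
    have h1 : Nat.card F * F.index = Nat.card G := Subgroup.card_mul_index F
    have h2 : Nat.card H * H.index = Nat.card G := Subgroup.card_mul_index H
    have h4 : Nat.card (F.subgroupOf H) * (F.subgroupOf H).index = Nat.card ↥H :=
      Subgroup.card_mul_index _
    have hI : (F.subgroupOf H).index ≠ 0 := by
      have : F.index ≠ 0 := Subgroup.index_ne_zero_of_finite
      omega
    have heq : Nat.card F * F.index =
        (Nat.card (F.subgroupOf H) * (F.subgroupOf H).index) * p ^ a := by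
      rw [h1, h4, ← hind, h2]
    have key : Nat.card F = Nat.card (F.subgroupOf H) * p ^ a := by
      have hI' : F.index ≠ 0 := Subgroup.index_ne_zero_of_finite
      apply Nat.eq_of_mul_eq_mul_right (Nat.pos_of_ne_zero hI')
      rw [heq, ← h3]; ring
    exact hpF ⟨Nat.card (F.subgroupOf H) * p ^ (a - 1), by
      rw [key]
      have : p ^ a = p * p ^ (a - 1) := by
        rw [← pow_succ']
        congr 1
        omega
      rw [this]; ring⟩
  -- Step 3: F ≤ FH.map H.subtype
  refine ⟨hFH', ?_, hpF⟩
  have hnorm' : (F.subgroupOf H).Normal := hFnorm.subgroupOf H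
  have hnil' : Group.IsNilpotent ↥(F.subgroupOf H) := by
    have e := (Subgroup.subgroupOfEquivOfLe hFH').symm
    exact nilpotent_of_mulEquiv e
  have hle' : F.subgroupOf H ≤ FH := hFHmax _ hnorm' hnil'
  have : F = (F.subgroupOf H).map H.subtype := by
    rw [Subgroup.subgroupOf_map_subtype, inf_eq_left.mpr hFH']
  rw [this]
  exact Subgroup.map_mono hle'
end
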